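/- Let $U, V$ be Hilbert spaces, $B' \in \mathcal{L}(V,U)$ boundedly invertible, and equip $V$ with the inner product $\langle v, w\rangle_{V,\mathrm{opt}} := \langle B'v, B'w\rangle_U$. Let $U^\delta \subseteq U$ and $V^\delta \subseteq V$ be closed subspaces, let $P^\delta$ be the $\langle\cdot,\cdot\rangle_{V,\mathrm{opt}}$-orthogonal projector onto $V^\delta$, and define $\gamma^\delta := \inf_{0\neq u \in U^\delta} \sup_{0 \neq v \in V^\delta} \frac{|\langle u, B'v\rangle_U|}{\|u\|_U \|B'v\|_U}$. Then $\sup_{0 \neq u \in U^\delta} \frac{\inf_{v \in V^\delta} \|B'[(B')^{-1}u - v]\|_U^2}{\|u\|_U^2} = 1 - (\gamma^\delta)^2$. -/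

import Mathlib

open scoped InnerProductSpace

/-- With the optimal-test inner product `⟪v,w⟫_{V,opt} = ⟪B'v, B'w⟫_U` on `V`,
closed subspaces `Uδ ⊆ U` (nonzero) and `Vδ ⊆ V`, and
`γδ = inf_{0≠u∈Uδ} sup_{0≠v∈Vδ} |⟪u, B'v⟫|/(‖u‖‖B'v‖)`, one has
`sup_{0≠u∈Uδ} (inf_{v∈Vδ} ‖B'[(B')⁻¹u - v]‖²)/‖u‖² = 1 - γδ²`. -/
theorem infsup_approximation_identity
    {U V : Type*}
    [NormedAddCommGroup U] [InnerProductSpace ℂ U] [CompleteSpace U]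
    [NormedAddCommGroup V] [InnerProductSpace ℂ V] [CompleteSpace V]
    (B' : V ≃L[ℂ] U)
    (Uδ : Submodule ℂ U) (Vδ : Submodule ℂ V)
    (hUδ : Uδ ≠ ⊥)
    (hUc : IsClosed (Uδ : Set U)) (hVc : IsClosed (Vδ : Set V)) :
    (⨆ u : {u : Uδ // (u : U) ≠ 0},
        (⨅ v : Vδ, ‖B' (B'.symm ((u : Uδ) : U) - (v : V))‖ ^ 2) / ‖((u : Uδ) : U)‖ ^ 2)
      = 1 - (⨅ u : {u : Uδ // (u : U) ≠ 0}, ⨆ v : {v : Vδ // (v : V) ≠ 0},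
          ‖(⟪((u : Uδ) : U), B' ((v : Vδ) : V)⟫_ℂ : ℂ)‖
            / (‖((u : Uδ) : U)‖ * ‖B' ((v : Vδ) : V)‖)) ^ 2 := by
  classical
  obtain ⟨x₀, hx₀mem, hx₀⟩ := (Submodule.ne_bot_iff _).mp hUδ
  haveI hne : Nonempty {u : Uδ // (u : U) ≠ 0} := ⟨⟨⟨x₀, hx₀mem⟩, hx₀⟩⟩
  set W : Submodule ℂ U := Vδ.map ((B' : V →L[ℂ] U) : V →ₗ[ℂ] U) with hWdef
  have hWc : IsClosed (W : Set U) := by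
    have h := B'.toHomeomorph.isClosedMap (Vδ : Set V) hVc
    have : (W : Set U) = B'.toHomeomorph '' (Vδ : Set V) := by
      ext x
      simp [hWdef, Set.mem_image]
    rw [this]
    exact h
  haveI : CompleteSpace W := hWc.completeSpace_coe
  -- notation for the projection
  set P : U → U := fun x => ((W.orthogonalProjectionOnto x : W) : U) with hPdef
  have hPmem : ∀ x : U, P x ∈ W := fun x => (W.orthogonalProjectionOnto x).2
  have hperp : ∀ x : U, ∀ w ∈ W, ⟪w, x - P x⟫_ℂ = 0 := by
    intro x w hw
    exact (Submodule.mem_orthogonal _ _).mp (W.sub_starProjection_mem_orthogonal x) w hw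
  -- Pythagoras
  have hpyth : ∀ x : U, ∀ w ∈ W, ‖x - w‖ ^ 2 = ‖x - P x‖ ^ 2 + ‖P x - w‖ ^ 2 := by
    intro x w hw
    have hdecomp : x - w = (P x - w) + (x - P x) := by abel
    have hz : ⟪P x - w, x - P x⟫_ℂ = 0 := by
      have := hperp x (P x - w) (Submodule.sub_mem _ (hPmem x) hw)
      exact this
    rw [hdecomp, norm_add_sq (𝕜 := ℂ), hz]
    simp
    ring
  have hPnormsq : ∀ x : U, ‖x - P x‖ ^ 2 = ‖x‖ ^ 2 - ‖P x‖ ^ 2 := by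
    intro x
    have := hpyth x 0 (Submodule.zero_mem W)
    simp only [sub_zero] at this
    linarith
  have hPle : ∀ x : U, ‖P x‖ ≤ ‖x‖ := by
    intro x
    have h1 := hPnormsq x
    have h2 : (0 : ℝ) ≤ ‖x - P x‖ ^ 2 := sq_nonneg _
    have h3 : ‖P x‖ ^ 2 ≤ ‖x‖ ^ 2 := by linarith
    exact (pow_le_pow_iff_left₀ (norm_nonneg _) (norm_nonneg _) (by norm_num)).mp h3
  -- the preimage of P x in Vδ
  have hsymmP : ∀ x : U, B'.symm (P x) ∈ Vδ ∧ B' (B'.symm (P x)) = P x := by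
    intro x
    obtain ⟨v₁, hv₁, hv₁e⟩ := (Submodule.mem_map).mp (hPmem x)
    refine ⟨?_, B'.apply_symm_apply _⟩
    have : B'.symm (P x) = v₁ := by
      rw [← hv₁e]
      exact B'.symm_apply_apply v₁
    rw [this]; exact hv₁
  -- Part A : the infimum over v equals ‖x‖² - ‖P x‖²
  have hA : ∀ x : U, (⨅ v : Vδ, ‖B' (B'.symm x - (v : V))‖ ^ 2) = ‖x‖ ^ 2 - ‖P x‖ ^ 2 := by
    intro x
    have hterm : ∀ v : Vδ, ‖B' (B'.symm x - (v : V))‖ ^ 2 = ‖x - B' (v : V)‖ ^ 2 := by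
      intro v
      rw [map_sub, B'.apply_symm_apply]
    have hbdd : BddBelow (Set.range fun v : Vδ => ‖B' (B'.symm x - (v : V))‖ ^ 2) := by
      refine ⟨0, ?_⟩
      rintro y ⟨v, rfl⟩
      positivity
    apply le_antisymm
    · obtain ⟨hmem, heq⟩ := hsymmP x
      have := ciInf_le hbdd (⟨B'.symm (P x), hmem⟩ : Vδ)
      refine this.trans ?_
      rw [hterm, heq, ← hPnormsq x]
    · apply le_ciInf
      intro v
      rw [hterm]
      have hw : B' (v : V) ∈ W := Submodule.mem_map_of_mem v.2
      have := hpyth x (B' (v : V)) hw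
      have h2 : (0 : ℝ) ≤ ‖P x - B' (v : V)‖ ^ 2 := sq_nonneg _
      have := hPnormsq x
      linarith [hpyth x (B' (v : V)) hw]
  -- Part B : the supremum over nonzero v equals ‖P x‖ / ‖x‖
  have hB : ∀ x : U, x ≠ 0 →
      (⨆ v : {v : Vδ // (v : V) ≠ 0},
        ‖(⟪x, B' ((v : Vδ) : V)⟫_ℂ : ℂ)‖ / (‖x‖ * ‖B' ((v : Vδ) : V)‖)) = ‖P x‖ / ‖x‖ := by
    intro x hx
    have hxpos : (0 : ℝ) < ‖x‖ := norm_pos_iff.mpr hx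
    have hinner : ∀ w ∈ W, ⟪w, x⟫_ℂ = ⟪w, P x⟫_ℂ := by
      intro w hw
      have := hperp x w hw
      rw [inner_sub_right] at this
      linear_combination this
    have hbound : ∀ v : {v : Vδ // (v : V) ≠ 0},
        ‖(⟪x, B' ((v : Vδ) : V)⟫_ℂ : ℂ)‖ / (‖x‖ * ‖B' ((v : Vδ) : V)‖) ≤ ‖P x‖ / ‖x‖ := by
      intro v
      set w : U := B' ((v : Vδ) : V) with hwdef
      have hw : w ∈ W := Submodule.mem_map_of_mem (v : Vδ).2
      have hw0 : w ≠ 0 := by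
        simp only [hwdef, ne_eq, ContinuousLinearEquiv.map_eq_zero_iff]
        exact_mod_cast fun h => v.2 (by exact_mod_cast h)
      have hwpos : (0 : ℝ) < ‖w‖ := norm_pos_iff.mpr hw0
      have h1 : ‖(⟪x, w⟫_ℂ : ℂ)‖ = ‖(⟪w, P x⟫_ℂ : ℂ)‖ := by
        rw [← hinner w hw, ← inner_conj_symm x w, RCLike.norm_conj]
      have h2 : ‖(⟪w, P x⟫_ℂ : ℂ)‖ ≤ ‖w‖ * ‖P x‖ := norm_inner_le_norm _ _
      calc ‖(⟪x, w⟫_ℂ : ℂ)‖ / (‖x‖ * ‖w‖) ≤ (‖w‖ * ‖P x‖) / (‖x‖ * ‖w‖) := by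
            apply div_le_div_of_nonneg_right ?_ (by positivity) |>.trans_eq rfl
            · rw [h1]; exact h2
        _ = ‖P x‖ / ‖x‖ := by
            field_simp
    by_cases hp : P x = 0
    · have hub : ∀ v : {v : Vδ // (v : V) ≠ 0},
          ‖(⟪x, B' ((v : Vδ) : V)⟫_ℂ : ℂ)‖ / (‖x‖ * ‖B' ((v : Vδ) : V)‖) = 0 := by
        intro v
        have := hbound v
        rw [hp] at this
        simp only [norm_zero, zero_div] at this
        have h0 : (0 : ℝ) ≤ ‖(⟪x, B' ((v : Vδ) : V)⟫_ℂ : ℂ)‖ / (‖x‖ * ‖B' ((v : Vδ) : V)‖) := by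
          positivity
        linarith
      rw [hp]
      simp only [norm_zero, zero_div]
      rcases isEmpty_or_nonempty {v : Vδ // (v : V) ≠ 0} with h | h
      · exact Real.iSup_of_isEmpty _
      · rw [iSup_congr hub]
        exact ciSup_const
    · -- witness : v = B'.symm (P x)
      obtain ⟨hmem, heq⟩ := hsymmP x
      have hv0 : B'.symm (P x) ≠ 0 := by
        intro h
        apply hp
        rw [← heq, h, map_zero]
      set vw : {v : Vδ // (v : V) ≠ 0} := ⟨⟨B'.symm (P x), hmem⟩, hv0⟩ with hvw
      haveI : Nonempty {v : Vδ // (v : V) ≠ 0} := ⟨vw⟩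
      have hppos : (0 : ℝ) < ‖P x‖ := norm_pos_iff.mpr hp
      have hba : BddAbove (Set.range fun v : {v : Vδ // (v : V) ≠ 0} =>
          ‖(⟪x, B' ((v : Vδ) : V)⟫_ℂ : ℂ)‖ / (‖x‖ * ‖B' ((v : Vδ) : V)‖)) := by
        refine ⟨‖P x‖ / ‖x‖, ?_⟩
        rintro y ⟨v, rfl⟩
        exact hbound v
      apply le_antisymm (ciSup_le hbound)
      have hwitness : ‖(⟪x, B' ((vw : Vδ) : V)⟫_ℂ : ℂ)‖ / (‖x‖ * ‖B' ((vw : Vδ) : V)‖)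
          = ‖P x‖ / ‖x‖ := by
        have hval : (B' ((vw : Vδ) : V)) = P x := heq
        rw [hval]
        have h1 : ⟪x, P x⟫_ℂ = ⟪P x, P x⟫_ℂ := by
          calc ⟪x, P x⟫_ℂ = (starRingEnd ℂ) ⟪P x, x⟫_ℂ := (inner_conj_symm x (P x)).symm
            _ = (starRingEnd ℂ) ⟪P x, P x⟫_ℂ := by rw [hinner (P x) (hPmem x)]
            _ = ⟪P x, P x⟫_ℂ := inner_conj_symm _ _
        rw [h1, inner_self_eq_norm_sq_to_K, norm_pow, RCLike.norm_ofReal, abs_norm]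
        field_simp
      calc ‖P x‖ / ‖x‖
          = ‖(⟪x, B' ((vw : Vδ) : V)⟫_ℂ : ℂ)‖ / (‖x‖ * ‖B' ((vw : Vδ) : V)‖) := hwitness.symm
        _ ≤ _ := le_ciSup hba vw
  -- Part C : putting everything together
  set g : {u : Uδ // (u : U) ≠ 0} → ℝ := fun u => ‖P ((u : Uδ) : U)‖ / ‖((u : Uδ) : U)‖
    with hgdef
  have hg0 : ∀ u, 0 ≤ g u := fun u => div_nonneg (norm_nonneg _) (norm_nonneg _)
  have hg1 : ∀ u, g u ≤ 1 := fun u =>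
    div_le_one_of_le₀ (hPle _) (norm_nonneg _)
  have hL : ∀ u : {u : Uδ // (u : U) ≠ 0},
      (⨅ v : Vδ, ‖B' (B'.symm ((u : Uδ) : U) - (v : V))‖ ^ 2) / ‖((u : Uδ) : U)‖ ^ 2
        = 1 - g u ^ 2 := by
    intro u
    have hxpos : (0 : ℝ) < ‖((u : Uδ) : U)‖ := norm_pos_iff.mpr u.2
    rw [hA]
    rw [hgdef]
    rw [div_pow, sub_div, div_self (by positivity)]
  have hR : ∀ u : {u : Uδ // (u : U) ≠ 0},
      (⨆ v : {v : Vδ // (v : V) ≠ 0},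
        ‖(⟪((u : Uδ) : U), B' ((v : Vδ) : V)⟫_ℂ : ℂ)‖
          / (‖((u : Uδ) : U)‖ * ‖B' ((v : Vδ) : V)‖)) = g u := fun u => hB _ u.2
  rw [iSup_congr hL, iInf_congr hR]
  -- now : ⨆ u, (1 - g u ^ 2) = 1 - (⨅ u, g u) ^ 2
  have hbddg : BddBelow (Set.range g) := ⟨0, by rintro y ⟨u, rfl⟩; exact hg0 u⟩
  have hbddg2 : BddBelow (Set.range fun u => g u ^ 2) :=
    ⟨0, by rintro y ⟨u, rfl⟩; positivity⟩
  have hinf2nonneg : (0 : ℝ) ≤ ⨅ u, g u ^ 2 := le_ciInf fun u => sq_nonneg _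
  have hsq : (⨅ u, g u) ^ 2 = ⨅ u, g u ^ 2 := by
    have hsqrt : Real.sqrt (⨅ u, g u ^ 2) = ⨅ u, Real.sqrt (g u ^ 2) :=
      Monotone.map_ciInf_of_continuousAt
        (Real.continuous_sqrt.continuousAt)
        (fun a b hab => Real.sqrt_le_sqrt hab) hbddg2
    have h2 : (⨅ u, Real.sqrt (g u ^ 2)) = ⨅ u, g u :=
      iInf_congr fun u => Real.sqrt_sq (hg0 u)
    rw [h2] at hsqrt
    rw [← hsqrt, Real.sq_sqrt hinf2nonneg]
  rw [hsq]
  have hanti : Antitone (fun t : ℝ => 1 - t) := fun a b hab => sub_le_sub_left hab 1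
  exact (Antitone.map_ciInf_of_continuousAt
    (f := fun t : ℝ => 1 - t) (g := fun u => g u ^ 2)
    ((continuous_const.sub continuous_id).continuousAt) hanti hbddg2).symm
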